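/- arXiv:math/0703072 — 2 statements merged into one kernel-verified Lean document; each statement's English description precedes it below -/
import Mathlib

section
/- Let v₁, v₂, v₃, v₄ be points of ℤ^d and say a tuple 𝐯 of points is r-connected if the graph on its index set with an edge between i and j whenever ‖v_i − v_j‖_∞ ≤ r is connected; the gap of 𝐯 is the smallest r such that 𝐯 is r-connected. If 𝐯 = (v₁,v₂,v₃,v₄) has gap r, then there exists a partition of {1,2,3,4} into two nonempty sets J and J^c such that: (i) min{‖v_i − v_j‖_∞ : i ∈ J, j ∈ J^c} = r, and (ii) both (v_i)_{i∈J} and (v_j)_{j∈J^c} are r-connected. -/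
/-- Sup-norm distance between two points of `ℤ^d`. -/
def supDist (d : ℕ) (x y : Fin d → ℤ) : ℕ :=
  Finset.univ.sup fun i => (x i - y i).natAbs

/-- A tuple `v` is `r`-connected on an index set `s` if the graph on `s` with
an edge between `a` and `b` whenever `‖v a − v b‖_∞ ≤ r` is connected. -/
def TupleConn {d k : ℕ} (v : Fin k → (Fin d → ℤ)) (r : ℕ)
    (s : Finset (Fin k)) : Prop :=
  ∀ i ∈ s, ∀ j ∈ s,
    Relation.ReflTransGen
      (fun a b => a ∈ s ∧ b ∈ s ∧ supDist d (v a) (v b) ≤ r) i j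

namespace S9

def lst4 : List (Fin 4) := [0,1,2,3]

def bstep (e : Fin 4 → Fin 4 → Bool) (sb : Fin 4 → Bool) (t : Fin 4 → Bool) : Fin 4 → Bool :=
  fun b => sb b && (t b || lst4.any (fun a => t a && e a b))

def reachB (e : Fin 4 → Fin 4 → Bool) (sb : Fin 4 → Bool) (a : Fin 4) : Fin 4 → Bool :=
  bstep e sb (bstep e sb (bstep e sb (bstep e sb (fun b => b == a))))

def bconn (e : Fin 4 → Fin 4 → Bool) (sb : Fin 4 → Bool) : Bool :=
  lst4.all fun i => !sb i || lst4.all fun j => !sb j || reachB e sb i j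

abbrev R (e : Fin 4 → Fin 4 → Bool) (sb : Fin 4 → Bool) (x y : Fin 4) : Prop :=
  sb x = true ∧ sb y = true ∧ e x y = true

lemma bstep_sound {e sb : _} {a : Fin 4} {t : Fin 4 → Bool}
    (h : ∀ x, t x = true → Relation.ReflTransGen (R e sb) a x ∧ sb x = true) :
    ∀ x, bstep e sb t x = true → Relation.ReflTransGen (R e sb) a x ∧ sb x = true := by
  intro x hx
  simp only [bstep, Bool.and_eq_true, Bool.or_eq_true, List.any_eq_true] at hx
  obtain ⟨hsb, h2 | ⟨y, -, hy1, hy2⟩⟩ := hx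
  · exact ⟨(h x h2).1, hsb⟩
  · exact ⟨(h y hy1).1.tail ⟨(h y hy1).2, hsb, hy2⟩, hsb⟩

lemma reachB_sound {e sb : _} {a : Fin 4} (ha : sb a = true) :
    ∀ x, reachB e sb a x = true → Relation.ReflTransGen (R e sb) a x := by
  have h0 : ∀ x, (x == a : Bool) = true → Relation.ReflTransGen (R e sb) a x ∧ sb x = true := by
    intro x hx
    have : x = a := by simpa using hx
    subst this; exact ⟨Relation.ReflTransGen.refl, ha⟩
  exact fun x hx => (bstep_sound (bstep_sound (bstep_sound (bstep_sound h0))) x hx).1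

lemma bstep_mono {e sb : _} {t t' : Fin 4 → Bool} (h : ∀ x, t x = true → t' x = true) :
    ∀ x, bstep e sb t x = true → bstep e sb t' x = true := by
  intro x hx
  simp only [bstep, Bool.and_eq_true, Bool.or_eq_true, List.any_eq_true] at hx ⊢
  obtain ⟨hsb, h2 | ⟨y, hym, hy⟩⟩ := hx 
  
  · exact ⟨hsb, Or.inl (h x h2)⟩
  · exact ⟨hsb, Or.inr ⟨y, hym, by simp [h y hy.1, hy.2]⟩⟩

lemma bstep_le_sb {e sb : _} {t : Fin 4 → Bool} :
    ∀ x, bstep e sb t x = true → sb x = true := by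
  intro x hx
  simp only [bstep, Bool.and_eq_true] at hx
  exact hx.1

lemma sub_step {e sb : _} {t : Fin 4 → Bool} (h : ∀ x, t x = true → sb x = true) :
    ∀ x, t x = true → bstep e sb t x = true := by
  intro x hx
  simp only [bstep, Bool.and_eq_true, Bool.or_eq_true]
  exact ⟨h x hx, Or.inl hx⟩

/-- saturation: one more step of `bstep` after `reachB` changes nothing. -/
lemma reachB_saturated {e sb : _} {a : Fin 4} (ha : sb a = true) :
    ∀ x, bstep e sb (reachB e sb a) x = true → reachB e sb a x = true := by
  intro x hx
  by_contra hne
  -- the chain t1 ⊆ t2 ⊆ t3 ⊆ t4 ⊆ t5 must be strictly increasing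
  set t0 : Fin 4 → Bool := fun b => b == a with ht0
  set t1 := bstep e sb t0 with ht1
  set t2 := bstep e sb t1 with ht2
  set t3 := bstep e sb t2 with ht3
  set t4 := bstep e sb t3 with ht4
  set t5 := bstep e sb t4 with ht5
  have h45 : t4 ≠ t5 := by
    intro h; rw [show reachB e sb a = t4 from rfl] at hx hne
    rw [show t5 = bstep e sb t4 from rfl] at h
    exact hne (h ▸ hx)
  have h34 : t3 ≠ t4 := fun h => h45 (by rw [ht4, ht5, h])
  have h23 : t2 ≠ t3 := fun h => h34 (by rw [ht3, ht4, h])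
  have h12 : t1 ≠ t2 := fun h => h23 (by rw [ht2, ht3, h])
  -- cards
  let S : (Fin 4 → Bool) → Finset (Fin 4) := fun t => Finset.univ.filter (fun x => t x = true)
  have hsub : ∀ t : Fin 4 → Bool, (∀ x, t x = true → sb x = true) →
      S t ⊆ S (bstep e sb t) := by
    intro t ht x hx
    simp only [S, Finset.mem_filter, Finset.mem_univ, true_and] at hx ⊢
    exact sub_step ht x hx
  have hle1 : ∀ x, t1 x = true → sb x = true := bstep_le_sb
  have hle2 : ∀ x, t2 x = true → sb x = true := bstep_le_sb
  have hle3 : ∀ x, t3 x = true → sb x = true := bstep_le_sb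
  have hle4 : ∀ x, t4 x = true → sb x = true := bstep_le_sb
  have hne_card : ∀ t t' : Fin 4 → Bool, t ≠ t' → S t ⊆ S t' → S t ⊂ S t' := by
    intro t t' hne hsub'
    refine ⟨hsub', fun hsub'' => hne ?_⟩
    funext x
    by_cases hx : t x = true
    · have : x ∈ S t' := hsub' (by simp [S, hx])
      simp only [S, Finset.mem_filter] at this
      rw [hx, this.2]
    · by_cases hx' : t' x = true
      · have : x ∈ S t := hsub'' (by simp [S, hx'])
        simp only [S, Finset.mem_filter] at this
        exact absurd this.2 hx
      · rw [Bool.eq_false_iff.mpr hx, Bool.eq_false_iff.mpr hx']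
  have c12 : S t1 ⊂ S t2 := hne_card _ _ h12 (hsub t1 hle1)
  have c23 : S t2 ⊂ S t3 := hne_card _ _ h23 (hsub t2 hle2)
  have c34 : S t3 ⊂ S t4 := hne_card _ _ h34 (hsub t3 hle3)
  have c45 : S t4 ⊂ S t5 := hne_card _ _ h45 (hsub t4 hle4)
  have l12 := Finset.card_lt_card c12
  have l23 := Finset.card_lt_card c23
  have l34 := Finset.card_lt_card c34
  have l45 := Finset.card_lt_card c45
  have hone : 1 ≤ (S t1).card := by
    refine Finset.card_pos.mpr ⟨a, ?_⟩
    simp only [S, Finset.mem_filter, Finset.mem_univ, true_and, ht1, bstep,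
      Bool.and_eq_true, Bool.or_eq_true]
    exact ⟨ha, Or.inl (by simp [ht0])⟩
  have hbig : (S t5).card ≤ 4 := by
    have := Finset.card_filter_le (Finset.univ : Finset (Fin 4)) (fun x => t5 x = true)
    simpa using this
  omega

lemma reachB_complete {e sb : _} {a b : Fin 4} (ha : sb a = true)
    (h : Relation.ReflTransGen (R e sb) a b) : reachB e sb a b = true := by
  induction h with
  | refl =>
    -- a ∈ t1 ⊆ t4
    have h1 : bstep e sb (fun x => x == a) a = true := by
      simp only [bstep, Bool.and_eq_true, Bool.or_eq_true]
      exact ⟨ha, Or.inl (by simp)⟩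
    exact bstep_mono (bstep_mono (bstep_mono (fun x hx => hx))) a
      (sub_step bstep_le_sb a (sub_step bstep_le_sb a (sub_step bstep_le_sb a h1)))
  | tail _ hR ih =>
    rename_i c b' _
    apply reachB_saturated ha
    simp only [bstep, Bool.and_eq_true, Bool.or_eq_true, List.any_eq_true]
    refine ⟨hR.2.1, Or.inr ⟨c, ?_, by simp [ih, hR.2.2]⟩⟩
    simp [lst4]; omega

lemma mem_lst4 (x : Fin 4) : x ∈ lst4 := by fin_cases x <;> simp [lst4]

lemma bconn_iff (e sb : _) :
    bconn e sb = true ↔ ∀ i j : Fin 4, sb i = true → sb j = true →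
      Relation.ReflTransGen (R e sb) i j := by
  constructor
  · intro h i j hi hj
    simp only [bconn, List.all_eq_true] at h
    have := h i (mem_lst4 i)
    simp only [Bool.or_eq_true, Bool.not_eq_true'] at this
    rcases this with h' | h'
    · rw [hi] at h'; exact absurd h' (by simp)
    · simp only [List.all_eq_true] at h'
      have := h' j (mem_lst4 j)
      simp only [Bool.or_eq_true, Bool.not_eq_true'] at this
      rcases this with h'' | h''
      · rw [hj] at h''; exact absurd h'' (by simp)
      · exact reachB_sound hi j h''
  · intro h
    simp only [bconn, List.all_eq_true]
    intro i _
    simp only [Bool.or_eq_true, Bool.not_eq_true']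
    by_cases hi : sb i = true
    · refine Or.inr ?_
      simp only [List.all_eq_true]
      intro j _
      simp only [Bool.or_eq_true, Bool.not_eq_true']
      by_cases hj : sb j = true
      · exact Or.inr (reachB_complete hi (h i j hi hj))
      · exact Or.inl (Bool.eq_false_iff.mpr hj)
    · exact Or.inl (Bool.eq_false_iff.mpr hi)


def W (a b c d e f : Fin 3) (i j : Fin 4) : Fin 3 :=
  match i.val, j.val with
  | 0,1 => a | 1,0 => a | 0,2 => b | 2,0 => b | 0,3 => c | 3,0 => c
  | 1,2 => d | 2,1 => d | 1,3 => e | 3,1 => e | 2,3 => f | 3,2 => f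
  | _,_ => 0

def E1 (a b c d e f : Fin 3) (i j : Fin 4) : Bool := W a b c d e f i j == 0
def E2 (a b c d e f : Fin 3) (i j : Fin 4) : Bool := !(W a b c d e f i j == 2)

set_option maxHeartbeats 4000000 in
lemma key : ∀ a b c d e f : Fin 3,
    bconn (E2 a b c d e f) (fun _ => true) = true →
    bconn (E1 a b c d e f) (fun _ => true) = false →
    ∃ Jb : Fin 4 → Bool, (∃ i, Jb i = true) ∧ (∃ i, Jb i = false) ∧
      (∀ i j, Jb i = true → Jb j = false → E1 a b c d e f i j = false) ∧
      (∃ i, ∃ j, Jb i = true ∧ Jb j = false ∧ E2 a b c d e f i j = true) ∧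
      bconn (E2 a b c d e f) Jb = true ∧
      bconn (E2 a b c d e f) (fun i => !Jb i) = true := by decide

lemma Wspec (g : Fin 4 → Fin 4 → Fin 3) (hsym : ∀ i j, g i j = g j i)
    (hdiag : ∀ i, g i i = 0) :
    ∀ i j, W (g 0 1) (g 0 2) (g 0 3) (g 1 2) (g 1 3) (g 2 3) i j = g i j := by
  intro i j
  fin_cases i <;> fin_cases j <;>
    first | rfl | exact (hdiag _).symm | exact hsym _ _

lemma supDist_comm (d : ℕ) (x y : Fin d → ℤ) : supDist d x y = supDist d y x := by
  unfold supDist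
  exact Finset.sup_congr rfl fun i _ => by rw [← neg_sub, Int.natAbs_neg]

lemma supDist_self (d : ℕ) (x : Fin d → ℤ) : supDist d x x = 0 := by
  simp [supDist]

lemma supDist_eq_zero {d : ℕ} {x y : Fin d → ℤ} (h : supDist d x y = 0) : x = y := by
  funext i
  have h1 : (x i - y i).natAbs ≤ supDist d x y :=
    Finset.le_sup (f := fun i => (x i - y i).natAbs) (Finset.mem_univ i)
  rw [h, Nat.le_zero] at h1
  have h2 : x i - y i = 0 := by omega
  linarith

end S9

open S9 in
/-- Splitting lemma for a 4-tuple with gap `r`: if `𝐯 = (v₁,v₂,v₃,v₄)` in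
`ℤ^d` is `r`-connected but not `r'`-connected for any `r' < r`, then
`{1,2,3,4}` can be partitioned into nonempty sets `J`, `Jᶜ` such that the
minimum sup-distance between the two groups equals `r` and both groups are
`r`-connected. -/
theorem stmt9 (d : ℕ) (v : Fin 4 → (Fin d → ℤ)) (r : ℕ)
    (hconn : TupleConn v r Finset.univ)
    (hgap : ∀ r' : ℕ, r' < r → ¬ TupleConn v r' Finset.univ) :
    ∃ J : Finset (Fin 4), J.Nonempty ∧ Jᶜ.Nonempty ∧
      (∀ i ∈ J, ∀ j ∈ Jᶜ, r ≤ supDist d (v i) (v j)) ∧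
      (∃ i ∈ J, ∃ j ∈ Jᶜ, supDist d (v i) (v j) = r) ∧
      TupleConn v r J ∧ TupleConn v r Jᶜ := by
  rcases Nat.eq_zero_or_pos r with hr0 | hr
  · -- r = 0 : all points are equal
    subst hr0
    have hall : ∀ j : Fin 4, v 0 = v j := by
      intro j
      have h := hconn 0 (Finset.mem_univ _) j (Finset.mem_univ _)
      induction h with
      | refl => rfl
      | tail _ hR ih => exact ih.trans (supDist_eq_zero (Nat.le_zero.mp hR.2.2))
    have hall2 : ∀ i j : Fin 4, v i = v j := fun i j => (hall i).symm.trans (hall j)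
    refine ⟨{0}, ⟨0, by simp⟩, ⟨1, by decide⟩, fun i _ j _ => Nat.zero_le _, ?_, ?_, ?_⟩
    · exact ⟨0, by simp, 1, by decide, by rw [hall2 0 1]; exact supDist_self d _⟩
    · intro i hi j hj
      simp only [Finset.mem_singleton] at hi hj
      subst hi; subst hj; exact Relation.ReflTransGen.refl
    · intro i hi j hj
      exact Relation.ReflTransGen.single
        ⟨hi, hj, by rw [hall2 i j, supDist_self]⟩
  · -- r ≥ 1
    set cls : ℕ → Fin 3 := fun n => if n ≤ r - 1 then 0 else if n ≤ r then 1 else 2 with hcls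
    have cls0 : ∀ n, cls n = 0 ↔ n ≤ r - 1 := by
      intro n; rw [hcls]; dsimp only; split_ifs with h1 h2 <;> simp [h1] <;> omega
    have cls2 : ∀ n, cls n ≠ 2 ↔ n ≤ r := by
      intro n; rw [hcls]; dsimp only; split_ifs with h1 h2 <;> simp <;> omega
    set g : Fin 4 → Fin 4 → Fin 3 := fun i j => cls (supDist d (v i) (v j)) with hg
    have hsym : ∀ i j, g i j = g j i := fun i j => by rw [hg]; dsimp only; rw [supDist_comm]
    have hdiag : ∀ i, g i i = 0 := by
      intro i; rw [hg]; dsimp only; rw [supDist_self]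
      exact (cls0 0).mpr (Nat.zero_le _)
    have hW := Wspec g hsym hdiag
    set A := g 0 1; set B := g 0 2; set C := g 0 3
    set D := g 1 2; set E := g 1 3; set F := g 2 3
    have hE1 : ∀ i j, E1 A B C D E F i j = true ↔ supDist d (v i) (v j) ≤ r - 1 := by
      intro i j
      rw [E1, beq_iff_eq, hW i j]
      exact cls0 _
    have hE2 : ∀ i j, E2 A B C D E F i j = true ↔ supDist d (v i) (v j) ≤ r := by
      intro i j
      rw [E2, Bool.not_eq_true', beq_eq_false_iff_ne, hW i j]
      exact cls2 _
    -- hypothesis 1 : E2-graph connected on everything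
    have hb2 : bconn (E2 A B C D E F) (fun _ => true) = true := by
      rw [bconn_iff]
      intro i j _ _
      refine Relation.ReflTransGen.mono ?_ _ _ (hconn i (Finset.mem_univ _) j (Finset.mem_univ _))
      intro x y hxy
      exact ⟨rfl, rfl, (hE2 x y).mpr hxy.2.2⟩
    -- hypothesis 2 : E1-graph disconnected
    have hb1 : bconn (E1 A B C D E F) (fun _ => true) = false := by
      by_contra hcon
      rw [Bool.not_eq_false, bconn_iff] at hcon
      refine hgap (r - 1) (by omega) ?_
      intro i _ j _
      refine Relation.ReflTransGen.mono ?_ _ _ (hcon i j rfl rfl)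
      intro x y hxy
      exact ⟨Finset.mem_univ _, Finset.mem_univ _, (hE1 x y).mp hxy.2.2⟩
    obtain ⟨Jb, ⟨i₀, hi₀⟩, ⟨j₀, hj₀⟩, hcross, ⟨i₁, j₁, hi₁, hj₁, he₁⟩, hcJ, hcJc⟩ :=
      key A B C D E F hb2 hb1
    refine ⟨Finset.univ.filter (fun i => Jb i = true), ?_, ?_, ?_, ?_, ?_, ?_⟩
    · exact ⟨i₀, by simp [hi₀]⟩
    · exact ⟨j₀, by simp [hj₀]⟩
    · intro i hi j hj
      simp only [Finset.mem_filter, Finset.mem_univ, true_and] at hi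
      simp only [Finset.mem_compl, Finset.mem_filter, Finset.mem_univ, true_and,
        Bool.not_eq_true] at hj
      have := hcross i j hi hj
      have hne := (hE1 i j).not.mp (by simp [this])
      omega
    · refine ⟨i₁, by simp [hi₁], j₁, ?_, ?_⟩
      · simp [hj₁]
      · have h1 := (hE2 i₁ j₁).mp he₁
        have := hcross i₁ j₁ hi₁ hj₁
        have h2 := (hE1 i₁ j₁).not.mp (by simp [this])
        omega
    · intro i hi j hj
      simp only [Finset.mem_filter, Finset.mem_univ, true_and] at hi hj
      rw [bconn_iff] at hcJ
      refine Relation.ReflTransGen.mono ?_ _ _ (hcJ i j hi hj)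
      intro x y hxy
      exact ⟨by simp [hxy.1], by simp [hxy.2.1], (hE2 x y).mp hxy.2.2⟩
    · intro i hi j hj
      simp only [Finset.mem_compl, Finset.mem_filter, Finset.mem_univ, true_and,
        Bool.not_eq_true] at hi hj
      rw [bconn_iff] at hcJc
      have hi' : (!Jb i) = true := by simp [hi]
      have hj' : (!Jb j) = true := by simp [hj]
      refine Relation.ReflTransGen.mono ?_ _ _ (hcJc i j hi' hj')
      intro x y hxy
      have hx : Jb x = false := by simpa using hxy.1
      have hy : Jb y = false := by simpa using hxy.2.1
      exact ⟨by simp [hx], by simp [hy], (hE2 x y).mp hxy.2.2⟩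
end

section
/- Let (Y_v)_{v∈ℤ^d} and, for each n, (Y_v^{(n)})_{v∈ℤ^d} be square-integrable random fields on a common probability space, and let (A_n) be finite subsets of ℤ^d with |A_n| → ∞. Suppose there is K > 0 such that for all n, v, w: |Cov(Y_v^{(n)} − Y_v, Y_w^{(n)})| ≤ K exp(−max(dist(v, A_n^c), |v−w|)/K), and the same bound with the roles of the two fields exchanged. Suppose moreover |A_n \ A_n^r|/|A_n| → 0 for each fixed r, where A_n^r := {v : (v+B_r)∩ℤ^d ⊆ A_n}. Then |A_n|^{-1} Σ_{v∈A_n} Σ_{w∈A_n} |Cov(Y_v^{(n)} − Y_v, Y_w^{(n)})| → 0 as n → ∞. -/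
open MeasureTheory Filter Topology Finset

/-- The covariance `E[(X − EX)(Y − EY)]` of two real random variables. -/
noncomputable def cov17 {Ω : Type*} [MeasurableSpace Ω] (P : Measure Ω)
    (X Y : Ω → ℝ) : ℝ :=
  ∫ ω, (X ω - ∫ ω', X ω' ∂P) * (Y ω - ∫ ω', Y ω' ∂P) ∂P

/-- Euclidean norm of a point of `ℤ^d`. -/
noncomputable def enorm17 {d : ℕ} (v : Fin d → ℤ) : ℝ :=
  Real.sqrt (∑ i, ((v i : ℝ)) ^ 2)

lemma enorm17_nonneg {d : ℕ} (v : Fin d → ℤ) : 0 ≤ enorm17 v := Real.sqrt_nonneg _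

lemma enorm17_neg {d : ℕ} (v : Fin d → ℤ) : enorm17 (-v) = enorm17 v := by
  simp [enorm17]

lemma abs_le_enorm17 {d : ℕ} (v : Fin d → ℤ) (i : Fin d) : |(v i : ℝ)| ≤ enorm17 v := by
  rw [← Real.sqrt_sq_eq_abs]
  exact Real.sqrt_le_sqrt (Finset.single_le_sum (f := fun j => ((v j : ℝ))^2)
    (fun j _ => sq_nonneg _) (Finset.mem_univ i))

lemma summable_exp_int17 (c : ℝ) (hc : 0 < c) :
    Summable (fun m : ℤ => Real.exp (-(|(m : ℝ)|) / c)) := by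
  have hlt : Real.exp (-(1:ℝ)/c) < 1 := by
    rw [Real.exp_lt_one_iff, neg_div]
    have : (0:ℝ) < 1/c := by positivity
    linarith
  have hgeo : Summable (fun n : ℕ => Real.exp (-(1:ℝ)/c) ^ n) :=
    summable_geometric_of_lt_one (Real.exp_nonneg _) hlt
  have hnat : Summable (fun n : ℕ => Real.exp (-((n:ℝ)) / c)) := by
    refine hgeo.congr fun n => ?_
    rw [← Real.exp_nat_mul]
    ring_nf
  apply Summable.of_nat_of_neg <;>
  · refine hnat.congr fun n => ?_
    have h0 : (0:ℝ) ≤ (n:ℝ) := Nat.cast_nonneg n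
    push_cast
    simp [abs_of_nonneg h0]

lemma summable_pi17 {g : ℤ → ℝ} (hg : Summable g) (hg0 : ∀ m, 0 ≤ g m) :
    ∀ d : ℕ, Summable (fun z : Fin d → ℤ => ∏ i, g (z i)) := by
  intro d
  induction d with
  | zero => exact Summable.of_finite
  | succ n ih =>
    have h2 : Summable (fun p : ℤ × (Fin n → ℤ) => g p.1 * ∏ i, g (p.2 i)) := by
      apply Summable.mul_of_nonneg hg ih hg0
      intro z
      exact Finset.prod_nonneg fun i _ => hg0 _
    rw [← (Fin.consEquiv (fun _ : Fin (n + 1) => ℤ)).summable_iff]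
    refine h2.congr fun p => ?_
    simp [Fin.consEquiv, Fin.prod_univ_succ]

lemma summable_exp_enorm17 {d : ℕ} (hd : 1 ≤ d) (K : ℝ) (hK : 0 < K) :
    Summable (fun z : Fin d → ℤ => Real.exp (-(enorm17 z) / K)) := by
  have hdc : (0:ℝ) < d * K := by
    have : (1:ℝ) ≤ d := by exact_mod_cast hd
    nlinarith
  have hsum := summable_pi17 (summable_exp_int17 (d * K) hdc)
    (fun m => (Real.exp_pos _).le) d
  refine Summable.of_nonneg_of_le (fun z => (Real.exp_pos _).le) (fun z => ?_) hsum
  rw [← Real.exp_sum]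
  apply Real.exp_le_exp.mpr
  rw [← Finset.sum_div]
  rw [div_le_div_iff₀ hK hdc]
  have h1 : ∑ i : Fin d, |((z i : ℝ))| ≤ d * enorm17 z := by
    calc ∑ i : Fin d, |((z i : ℝ))| ≤ ∑ _i : Fin d, enorm17 z :=
          Finset.sum_le_sum fun i _ => abs_le_enorm17 z i
      _ = d * enorm17 z := by simp [Finset.sum_const, nsmul_eq_mul]
  calc -(enorm17 z) * (d * K) = (-(d * enorm17 z)) * K := by ring
    _ ≤ (∑ i : Fin d, -|((z i : ℝ))|) * K := by
        apply mul_le_mul_of_nonneg_right _ hK.le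
        rw [Finset.sum_neg_distrib]
        linarith

/-- Approximation step of Lemma 7.3: if the covariances of the differences of
the finite-volume and infinite-volume fields decay like
`K exp(−max(dist(v, A_nᶜ), |v−w|)/K)` (and symmetrically), `|A_n| → ∞`, and
the interior proportion `|A_n^r|/|A_n| → 1` for each `r`, then
`|A_n|⁻¹ ∑_{v,w ∈ A_n} |Cov(Y_v^{(n)} − Y_v, Y_w^{(n)})| → 0`. -/
theorem stmt17 {Ω : Type*} [MeasurableSpace Ω] (P : Measure Ω)
    [IsProbabilityMeasure P] (d : ℕ) (hd : 1 ≤ d)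
    (Y : (Fin d → ℤ) → Ω → ℝ) (Yn : ℕ → (Fin d → ℤ) → Ω → ℝ)
    (hY : ∀ v, MemLp (Y v) 2 P) (hYn : ∀ n v, MemLp (Yn n v) 2 P)
    (A : ℕ → Finset (Fin d → ℤ))
    (hA : Tendsto (fun n => (A n).card) atTop atTop)
    (K : ℝ) (hK : 0 < K)
    (hcov1 : ∀ n : ℕ, ∀ v w : Fin d → ℤ,
      |cov17 P (Yn n v - Y v) (Yn n w)| ≤
        K * Real.exp (-(max
            (sInf ((fun u => enorm17 (v - u)) '' {u | u ∉ A n}))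
            (enorm17 (v - w))) / K))
    (hcov2 : ∀ n : ℕ, ∀ v w : Fin d → ℤ,
      |cov17 P (Y v) (Yn n w - Y w)| ≤
        K * Real.exp (-(max
            (sInf ((fun u => enorm17 (w - u)) '' {u | u ∉ A n}))
            (enorm17 (v - w))) / K))
    (hint : ∀ r : ℝ, 0 < r →
      Tendsto (fun n =>
          ((Set.ncard {v : Fin d → ℤ | v ∈ A n ∧
              ¬ ∀ z : Fin d → ℤ, enorm17 z ≤ r → v + z ∈ A n} : ℝ)
            / (A n).card)) atTop (𝓝 0)) :
    Tendsto (fun n =>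
        (∑ v ∈ A n, ∑ w ∈ A n, |cov17 P (Yn n v - Y v) (Yn n w)|)
          / (A n).card) atTop (𝓝 0) := by
  classical
  set f : (Fin d → ℤ) → ℝ := fun z => K * Real.exp (-(enorm17 z) / K) with hf_def
  have hf0 : ∀ z, 0 ≤ f z := fun z => by positivity
  have hf : Summable f := (summable_exp_enorm17 hd K hK).mul_left K
  set C := ∑' z, f z with hC_def
  have hC0 : 0 ≤ C := tsum_nonneg hf0
  -- pointwise bound by f (v - w)
  have hb1 : ∀ n v w, |cov17 P (Yn n v - Y v) (Yn n w)| ≤ f (v - w) := by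
    intro n v w
    refine (hcov1 n v w).trans ?_
    apply mul_le_mul_of_nonneg_left _ hK.le
    apply Real.exp_le_exp.mpr
    gcongr
    exact le_max_right _ _
  -- sum over any finset bounded by C
  have himg : ∀ (B : Finset (Fin d → ℤ)) (v : Fin d → ℤ),
      ∑ w ∈ B, f (v - w) = ∑ z ∈ B.image (fun w => v - w), f z := by
    intro B v
    rw [Finset.sum_image]
    intro x _ y _ h
    exact sub_right_injective h
  have hsumC : ∀ (B : Finset (Fin d → ℤ)) (v : Fin d → ℤ), ∑ w ∈ B, f (v - w) ≤ C := by
    intro B v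
    rw [himg]
    exact Summable.sum_le_tsum _ (fun z _ => hf0 z) hf
  rw [Metric.tendsto_nhds]
  intro ε hε
  -- choose the tail finset s
  obtain ⟨s, hs⟩ : ∃ s : Finset (Fin d → ℤ), C - ∑ z ∈ s, f z < ε/4 := by
    have h := hf.hasSum
    rw [HasSum] at h
    have h2 := h.eventually (Metric.ball_mem_nhds C (show (0:ℝ) < ε/4 by positivity))
    obtain ⟨s, hs⟩ := h2.exists
    refine ⟨s, ?_⟩
    rw [Real.dist_eq] at hs
    have := abs_lt.mp hs
    linarith [this.1]
  -- choose the radius r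
  obtain ⟨r, hr1, hr2⟩ : ∃ r : ℝ, 1 ≤ r ∧ (s.card : ℝ) * (K * Real.exp (-r / K)) < ε/4 := by
    have h1 : Tendsto (fun r : ℝ => -r / K) atTop atBot := by
      apply Tendsto.atBot_div_const hK
      exact tendsto_neg_atTop_atBot
    have htend : Tendsto (fun r : ℝ => (s.card : ℝ) * (K * Real.exp (-r / K))) atTop (𝓝 0) := by
      have h2 := Real.tendsto_exp_atBot.comp h1
      have h3 := (h2.const_mul K).const_mul (s.card : ℝ)
      simpa using h3
    have h4 := (htend.eventually_lt_const (show (0:ℝ) < ε/4 by positivity)).and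
      (eventually_ge_atTop (1:ℝ))
    obtain ⟨r, hr⟩ := h4.exists
    exact ⟨r, hr.2, hr.1⟩
  have hr0 : (0:ℝ) < r := lt_of_lt_of_le one_pos hr1
  -- per-v bound for interior v
  have hinner : ∀ n : ℕ, ∀ v ∈ A n, (∀ z : Fin d → ℤ, enorm17 z ≤ r → v + z ∈ A n) →
      ∑ w ∈ A n, |cov17 P (Yn n v - Y v) (Yn n w)| ≤ ε/2 := by
    intro n v hv hintv
    have hDv : r ≤ sInf ((fun u => enorm17 (v - u)) '' {u | u ∉ A n}) := by
      have hne : {u : Fin d → ℤ | u ∉ A n}.Nonempty := by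
        haveI : Nonempty (Fin d) := Fin.pos_iff_nonempty.mp hd
        obtain ⟨u, hu⟩ := Infinite.exists_notMem_finset (A n)
        exact ⟨u, hu⟩
      apply le_csInf (hne.image _)
      rintro b ⟨u, hu, rfl⟩
      by_contra hb
      push_neg at hb
      apply hu
      have h5 : v + (u - v) ∈ A n := by
        apply hintv
        rw [show u - v = -(v - u) from (neg_sub v u).symm, enorm17_neg]
        exact hb.le
      simpa using h5
    have hb2 : ∀ w, |cov17 P (Yn n v - Y v) (Yn n w)| ≤ K * Real.exp (-r / K) := by
      intro w
      refine (hcov1 n v w).trans ?_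
      apply mul_le_mul_of_nonneg_left _ hK.le
      apply Real.exp_le_exp.mpr
      gcongr
      exact hDv.trans (le_max_left _ _)
    rw [← Finset.sum_filter_add_sum_filter_not (A n) (fun w => v - w ∈ s)]
    have hpart1 : ∑ w ∈ (A n).filter (fun w => v - w ∈ s),
        |cov17 P (Yn n v - Y v) (Yn n w)| ≤ (s.card : ℝ) * (K * Real.exp (-r / K)) := by
      calc ∑ w ∈ (A n).filter (fun w => v - w ∈ s), |cov17 P (Yn n v - Y v) (Yn n w)|
          ≤ ∑ _w ∈ (A n).filter (fun w => v - w ∈ s), K * Real.exp (-r / K) :=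
            Finset.sum_le_sum fun w _ => hb2 w
        _ = (((A n).filter (fun w => v - w ∈ s)).card : ℝ) * (K * Real.exp (-r / K)) := by
            simp [Finset.sum_const, nsmul_eq_mul]
        _ ≤ (s.card : ℝ) * (K * Real.exp (-r / K)) := by
            apply mul_le_mul_of_nonneg_right _ (by positivity)
            have hcard : ((A n).filter (fun w => v - w ∈ s)).card ≤ s.card := by
              apply Finset.card_le_card_of_injOn (fun w => v - w)
              · intro w hw
                exact (Finset.mem_filter.mp hw).2
              · intro x _ y _ h
                exact sub_right_injective h
            exact_mod_cast hcard
    have hpart2 : ∑ w ∈ (A n).filter (fun w => ¬ (v - w ∈ s)),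
        |cov17 P (Yn n v - Y v) (Yn n w)| ≤ C - ∑ z ∈ s, f z := by
      set B := (A n).filter (fun w => ¬ (v - w ∈ s)) with hB
      have h6 : ∑ w ∈ B, |cov17 P (Yn n v - Y v) (Yn n w)| ≤ ∑ w ∈ B, f (v - w) :=
        Finset.sum_le_sum fun w _ => hb1 n v w
      refine h6.trans ?_
      rw [himg]
      have hdisj : Disjoint (B.image (fun w => v - w)) s := by
        rw [Finset.disjoint_left]
        intro z hz
        obtain ⟨w, hw, rfl⟩ := Finset.mem_image.mp hz
        exact (Finset.mem_filter.mp hw).2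
      have h7 : ∑ z ∈ B.image (fun w => v - w), f z + ∑ z ∈ s, f z
          = ∑ z ∈ (B.image (fun w => v - w)) ∪ s, f z :=
        (Finset.sum_union hdisj).symm
      have h8 : ∑ z ∈ (B.image (fun w => v - w)) ∪ s, f z ≤ C :=
        Summable.sum_le_tsum _ (fun z _ => hf0 z) hf
      linarith
    linarith
  -- eventual bounds
  have hCd : (0:ℝ) < ε / (2 * (C + 1)) := by positivity
  have hbadev := (hint r hr0).eventually_lt_const hCd
  have hcardev := hA.eventually_ge_atTop 1
  filter_upwards [hbadev, hcardev] with n hbad hcard1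
  have hcardpos : (0:ℝ) < ((A n).card : ℝ) := by exact_mod_cast lt_of_lt_of_le zero_lt_one hcard1
  rw [Real.dist_0_eq_abs, abs_of_nonneg (by positivity)]
  set Bad := (A n).filter (fun v => ¬ ∀ z : Fin d → ℤ, enorm17 z ≤ r → v + z ∈ A n) with hBadDef
  have hncard : (Set.ncard {v : Fin d → ℤ | v ∈ A n ∧
      ¬ ∀ z : Fin d → ℤ, enorm17 z ≤ r → v + z ∈ A n} : ℝ) = (Bad.card : ℝ) := by
    have : {v : Fin d → ℤ | v ∈ A n ∧ ¬ ∀ z : Fin d → ℤ, enorm17 z ≤ r → v + z ∈ A n}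
        = ↑Bad := by
      ext v
      simp [hBadDef, Finset.mem_filter]
    rw [this, Set.ncard_coe_finset]
  rw [hncard] at hbad
  have hsplit : ∑ v ∈ A n, ∑ w ∈ A n, |cov17 P (Yn n v - Y v) (Yn n w)|
      ≤ ((A n).card : ℝ) * (ε/2) + (Bad.card : ℝ) * C := by
    rw [← Finset.sum_filter_add_sum_filter_not (A n)
      (fun v => ∀ z : Fin d → ℤ, enorm17 z ≤ r → v + z ∈ A n)]
    have hg1 : ∑ v ∈ (A n).filter (fun v => ∀ z : Fin d → ℤ, enorm17 z ≤ r → v + z ∈ A n),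
        ∑ w ∈ A n, |cov17 P (Yn n v - Y v) (Yn n w)| ≤ ((A n).card : ℝ) * (ε/2) := by
      calc _ ≤ ∑ _v ∈ (A n).filter (fun v => ∀ z : Fin d → ℤ, enorm17 z ≤ r → v + z ∈ A n),
            (ε/2) := Finset.sum_le_sum fun v hv => by
              have hv' := Finset.mem_filter.mp hv
              exact hinner n v hv'.1 hv'.2
        _ = (((A n).filter (fun v => ∀ z : Fin d → ℤ, enorm17 z ≤ r → v + z ∈ A n)).card : ℝ)
              * (ε/2) := by simp [Finset.sum_const, nsmul_eq_mul]
        _ ≤ ((A n).card : ℝ) * (ε/2) := by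
            apply mul_le_mul_of_nonneg_right _ (by positivity)
            exact_mod_cast Finset.card_filter_le _ _
    have hg2 : ∑ v ∈ Bad, ∑ w ∈ A n, |cov17 P (Yn n v - Y v) (Yn n w)|
        ≤ (Bad.card : ℝ) * C := by
      calc ∑ v ∈ Bad, ∑ w ∈ A n, |cov17 P (Yn n v - Y v) (Yn n w)|
          ≤ ∑ _v ∈ Bad, C := Finset.sum_le_sum fun v _ => by
            calc ∑ w ∈ A n, |cov17 P (Yn n v - Y v) (Yn n w)|
                ≤ ∑ w ∈ A n, f (v - w) := Finset.sum_le_sum fun w _ => hb1 n v w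
              _ ≤ C := hsumC (A n) v
        _ = (Bad.card : ℝ) * C := by simp [Finset.sum_const, nsmul_eq_mul]
    linarith
  have hfinal : (∑ v ∈ A n, ∑ w ∈ A n, |cov17 P (Yn n v - Y v) (Yn n w)|) / ((A n).card : ℝ)
      ≤ ε/2 + ((Bad.card : ℝ) / ((A n).card : ℝ)) * C := by
    rw [div_le_iff₀ hcardpos]
    calc ∑ v ∈ A n, ∑ w ∈ A n, |cov17 P (Yn n v - Y v) (Yn n w)|
        ≤ ((A n).card : ℝ) * (ε/2) + (Bad.card : ℝ) * C := hsplit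
      _ = (ε/2 + ((Bad.card : ℝ) / ((A n).card : ℝ)) * C) * ((A n).card : ℝ) := by
          field_simp
  have hlast : ((Bad.card : ℝ) / ((A n).card : ℝ)) * C < ε/2 := by
    have h9 : ((Bad.card : ℝ) / ((A n).card : ℝ)) * C ≤ (ε / (2 * (C + 1))) * C :=
      mul_le_mul_of_nonneg_right hbad.le hC0
    have h10 : (ε / (2 * (C + 1))) * C < ε/2 := by
      rw [div_mul_eq_mul_div, div_lt_iff₀ (by positivity)]
      nlinarith
    linarith
  linarith
end
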